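/- Let α > 2, s > 0, and set δ = 2/α. Then the function x ↦ 1 − 1/(1 + s·‖x‖^(−α)) = s/(‖x‖^α + s) is Lebesgue integrable on ℝ² and ∫_{ℝ²} s/(‖x‖^α + s) dx = π·C(δ)·s^δ, where C(δ) = πδ/sin(πδ). -/

import Mathlib

open MeasureTheory Set Real

namespace SIRaux


lemma betaA {δ : ℝ} (h0 : 0 < δ) (h1 : δ < 1) :
    ∫ t in (0:ℝ)..1, t ^ (δ - 1) * (1 - t) ^ (-δ) = π / Real.sin (π * δ) := by
  have hre : 0 < Complex.re δ := by simpa using h0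
  have hre2 : 0 < Complex.re (1 - (δ:ℂ)) := by simp [sub_pos, h1]
  have hb := Complex.Gamma_mul_Gamma_eq_betaIntegral hre hre2
  have hadd : (δ:ℂ) + (1 - δ) = 1 := by ring
  rw [hadd, Complex.Gamma_one, one_mul] at hb
  have hC : Complex.betaIntegral δ (1 - δ) =
      ((∫ t in (0:ℝ)..1, t ^ (δ - 1) * (1 - t) ^ (-δ) : ℝ) : ℂ) := by
    rw [Complex.betaIntegral, ← intervalIntegral.integral_ofReal]
    refine intervalIntegral.integral_congr_ae ?_
    have : ∀ᵐ t : ℝ, t ∈ Set.uIoc (0:ℝ) 1 →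
        (t:ℂ) ^ ((δ:ℂ) - 1) * ((1:ℂ) - t) ^ ((1 - (δ:ℂ)) - 1) =
        ((t ^ (δ - 1) * (1 - t) ^ (-δ) : ℝ) : ℂ) := by
      filter_upwards with t ht
      rw [uIoc_of_le zero_le_one] at ht
      have ht0 : 0 ≤ t := le_of_lt ht.1
      have ht1 : (0:ℝ) ≤ 1 - t := by linarith [ht.2]
      rw [show ((δ:ℂ) - 1) = ((δ - 1 : ℝ) : ℂ) by push_cast; ring,
        show (1 - (δ:ℂ) - 1) = ((-δ : ℝ) : ℂ) by push_cast; ring,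
        show (1 - (t:ℂ)) = ((1 - t : ℝ) : ℂ) by push_cast; ring,
        ← Complex.ofReal_cpow ht0, ← Complex.ofReal_cpow ht1, ← Complex.ofReal_mul]
    exact this
  rw [hC] at hb
  have hΓ : Complex.Gamma δ * Complex.Gamma (1 - δ) = ((π / Real.sin (π * δ) : ℝ) : ℂ) := by
    rw [show ((1:ℂ) - δ) = ((1 - δ : ℝ) : ℂ) by push_cast; ring,
      Complex.Gamma_ofReal, Complex.Gamma_ofReal, ← Complex.ofReal_mul,
      Real.Gamma_mul_Gamma_one_sub]
  rw [hΓ] at hb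
  exact_mod_cast hb.symm

lemma betaB {δ : ℝ} (h0 : 0 < δ) (h1 : δ < 1)
    (hA : ∫ t in (0:ℝ)..1, t ^ (δ - 1) * (1 - t) ^ (-δ) = π / Real.sin (π * δ)) :
    ∫ v in Ioi (0:ℝ), v ^ (δ - 1) / (1 + v) = π / Real.sin (π * δ) := by
  set g : ℝ → ℝ := fun v => v ^ (δ - 1) / (1 + v) with hg
  have hderiv : ∀ t ∈ Ioo (0:ℝ) 1,
      HasDerivWithinAt (fun t => t / (1 - t)) (((1 - t) ^ 2)⁻¹) (Ioo (0:ℝ) 1) t := by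
    intro t ht
    have h1t : (1:ℝ) - t ≠ 0 := by have := ht.2; intro h; nlinarith [ht.2]
    have hd : HasDerivAt (fun x : ℝ => 1 - x) (-1) t := by
      simpa using (hasDerivAt_id t).const_sub 1
    have : HasDerivAt (fun t : ℝ => t / (1 - t))
        ((1 * (1 - t) - t * (-1)) / (1 - t) ^ 2) t :=
      (hasDerivAt_id t).div hd h1t
    refine this.hasDerivWithinAt.congr_deriv ?_
    rw [inv_eq_one_div]; congr 1; ring
  have hinj : InjOn (fun t : ℝ => t / (1 - t)) (Ioo 0 1) := by
    intro a ha b hb hab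
    have h1a : (1:ℝ) - a ≠ 0 := by have := ha.2; intro h; nlinarith
    have h1b : (1:ℝ) - b ≠ 0 := by have := hb.2; intro h; nlinarith
    field_simp at hab
    nlinarith [hab]
  have himg : (fun t : ℝ => t / (1 - t)) '' (Ioo 0 1) = Ioi 0 := by
    ext v; constructor
    · rintro ⟨t, ht, rfl⟩
      exact div_pos ht.1 (by linarith [ht.2])
    · intro hv
      refine ⟨v / (1 + v), ⟨div_pos hv (by linarith [mem_Ioi.mp hv]), ?_⟩, ?_⟩
      · rw [div_lt_one (by linarith [mem_Ioi.mp hv])]; linarith [mem_Ioi.mp hv]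
      · have h1v : (1:ℝ) + v ≠ 0 := by have := mem_Ioi.mp hv; positivity
        field_simp; ring
  have key := integral_image_eq_integral_abs_deriv_smul measurableSet_Ioo hderiv hinj g
  rw [himg] at key
  rw [key]
  have : ∀ t ∈ Ioo (0:ℝ) 1,
      |((1 - t) ^ 2)⁻¹| • g (t / (1 - t)) = t ^ (δ - 1) * (1 - t) ^ (-δ) := by
    intro t ht
    have ht0 : 0 < t := ht.1
    have ht1 : 0 < 1 - t := by linarith [ht.2]
    have h1 : (1:ℝ) + t / (1 - t) = (1 - t)⁻¹ := by field_simp; ring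
    have h2 : (t / (1 - t)) ^ (δ - 1) = t ^ (δ - 1) * ((1 - t) ^ (δ - 1))⁻¹ := by
      rw [Real.div_rpow ht0.le ht1.le, div_eq_mul_inv]
    have e1 : (((1 - t) ^ 2)⁻¹ : ℝ) = (1 - t) ^ (-2 : ℝ) := by
      rw [← Real.rpow_natCast (1 - t) 2, ← Real.rpow_neg ht1.le]; norm_num
    have e2 : (((1 - t) ^ (δ - 1))⁻¹ : ℝ) = (1 - t) ^ (1 - δ) := by
      rw [← Real.rpow_neg ht1.le]; ring_nf
    rw [hg]
    simp only [smul_eq_mul]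
    rw [abs_of_pos (by positivity), h1, h2, e1, e2, div_eq_mul_inv, inv_inv]
    have : (1 - t) ^ (-2 : ℝ) * (t ^ (δ - 1) * (1 - t) ^ (1 - δ) * (1 - t)) =
        t ^ (δ - 1) * ((1 - t) ^ (-2 : ℝ) * (1 - t) ^ (1 - δ) * (1 - t) ^ (1 : ℝ)) := by
      rw [Real.rpow_one]; ring
    rw [this, ← Real.rpow_add ht1, ← Real.rpow_add ht1]
    norm_num
    exact Or.inl (by ring_nf)
  rw [setIntegral_congr_fun measurableSet_Ioo this, ← MeasureTheory.integral_Ioc_eq_integral_Ioo,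
    ← intervalIntegral.integral_of_le zero_le_one, hA]

lemma betaJ {δ : ℝ} (h0 : 0 < δ) (h1 : δ < 1) :
    ∫ v in Ioi (0:ℝ), v ^ (δ - 1) / (1 + v) = π / Real.sin (π * δ) :=
  betaB h0 h1 (betaA h0 h1)

lemma oneD {α s : ℝ} (hα : 2 < α) (hs : 0 < s) :
    ∫ y in Ioi (0:ℝ), y * (s / (y ^ α + s)) =
      α⁻¹ * s ^ (2/α) * (π / Real.sin (π * (2/α))) := by
  have hα0 : (0:ℝ) < α := by linarith
  set δ : ℝ := 2/α with hδ
  have hδ0 : 0 < δ := by positivity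
  have hδ1 : δ < 1 := by rw [hδ, div_lt_one hα0]; linarith
  set g : ℝ → ℝ := fun u => α⁻¹ * (u ^ (δ - 1) * (s / (u + s))) with hg
  have step1 : ∫ y in Ioi (0:ℝ), y * (s / (y ^ α + s)) = ∫ u in Ioi (0:ℝ), g u := by
    rw [← integral_comp_rpow_Ioi_of_pos (g := g) hα0]
    refine setIntegral_congr_fun measurableSet_Ioi fun y hy => ?_
    have hy0 : (0:ℝ) < y := hy
    have e1 : (y ^ α) ^ (δ - 1) = y ^ (2 - α) := by
      rw [← Real.rpow_mul hy0.le, show α * (δ - 1) = 2 - α by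
        rw [hδ]; field_simp]
    have e2 : y ^ (α - 1) * y ^ (2 - α) = y := by
      rw [← Real.rpow_add hy0, show α - 1 + (2 - α) = 1 by ring, Real.rpow_one]
    rw [hg]
    simp only [smul_eq_mul]
    rw [e1]
    calc y * (s / (y ^ α + s))
        = (α * α⁻¹) * ((y ^ (α - 1) * y ^ (2 - α)) * (s / (y ^ α + s))) := by
          rw [mul_inv_cancel₀ hα0.ne', e2, one_mul]
      _ = α * y ^ (α - 1) * (α⁻¹ * (y ^ (2 - α) * (s / (y ^ α + s)))) := by ring
  rw [step1]
  have hsc := integral_comp_mul_left_Ioi g 0 hs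
  rw [mul_zero, smul_eq_mul] at hsc
  have step2 : ∫ x in Ioi (0:ℝ), g (s * x) =
      α⁻¹ * s ^ (δ - 1) * ∫ v in Ioi (0:ℝ), v ^ (δ - 1) / (1 + v) := by
    rw [← MeasureTheory.integral_const_mul]
    refine setIntegral_congr_fun measurableSet_Ioi fun x hx => ?_
    have hx0 : (0:ℝ) < x := hx
    rw [hg]
    have e3 : (s * x) ^ (δ - 1) = s ^ (δ - 1) * x ^ (δ - 1) :=
      Real.mul_rpow hs.le hx0.le
    have e4 : s / (s * x + s) = 1 / (1 + x) := by
      rw [show s * x + s = s * (x + 1) by ring]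
      rw [div_eq_div_iff (by positivity) (by positivity)]
      ring
    simp only [e3, e4]
    field_simp
  rw [step2] at hsc
  have : ∫ u in Ioi (0:ℝ), g u
      = s * (α⁻¹ * s ^ (δ - 1) * ∫ v in Ioi (0:ℝ), v ^ (δ - 1) / (1 + v)) := by
    rw [hsc]; field_simp
  rw [this, betaJ hδ0 hδ1]
  have : s * s ^ (δ - 1) = s ^ δ := by
    nth_rewrite 1 [← Real.rpow_one s]
    rw [← Real.rpow_add hs]; ring_nf
  calc s * (α⁻¹ * s ^ (δ - 1) * (π / Real.sin (π * δ)))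
      = α⁻¹ * (s * s ^ (δ - 1)) * (π / Real.sin (π * δ)) := by ring
    _ = α⁻¹ * s ^ δ * (π / Real.sin (π * δ)) := by rw [this]

end SIRaux

/-- For `α > 2`, `s > 0`, `δ = 2/α`, the function `x ↦ s/(‖x‖^α + s)` is Lebesgue
integrable on `ℝ²` and `∫_{ℝ²} s/(‖x‖^α + s) dx = π·C(δ)·s^δ` with
`C(δ) = πδ/sin(πδ)`. -/
theorem stmt_1 (α s : ℝ) (hα : 2 < α) (hs : 0 < s) :
    Integrable (fun x : EuclideanSpace ℝ (Fin 2) => s / (‖x‖ ^ α + s)) ∧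
    ∫ x : EuclideanSpace ℝ (Fin 2), s / (‖x‖ ^ α + s) =
      π * (π * (2 / α) / Real.sin (π * (2 / α))) * s ^ (2 / α) := by
  constructor
  · have hα0 : (0:ℝ) < α := by linarith
    have hcont : Continuous (fun x : EuclideanSpace ℝ (Fin 2) => s / (‖x‖ ^ α + s)) := by
      apply continuous_const.div
      · exact (continuous_norm.rpow_const fun x => Or.inr hα0.le).add continuous_const
      · intro x
        have : (0:ℝ) < ‖x‖ ^ α + s := by positivity
        exact this.ne'
    set C : ℝ := s * 2 ^ α * max 1 s⁻¹ with hC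
    have hint : Integrable (fun x : EuclideanSpace ℝ (Fin 2) => C * (1 + ‖x‖) ^ (-α)) := by
      refine (integrable_one_add_norm ?_).const_mul C
      rw [finrank_euclideanSpace_fin]; exact_mod_cast hα
    refine hint.mono' hcont.aestronglyMeasurable ?_
    filter_upwards with x
    set r : ℝ := ‖x‖ with hr
    have hr0 : 0 ≤ r := norm_nonneg x
    have hden : (0:ℝ) < r ^ α + s := by positivity
    have h1r : (0:ℝ) < 1 + r := by linarith
    have hpow : (0:ℝ) < (1 + r) ^ α := rpow_pos_of_pos h1r α
    have key : s * (1 + r) ^ α ≤ C * (r ^ α + s) := by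
      have b1 : (1 + r) ^ α ≤ 2 ^ α * (1 + r ^ α) := by
        have hm : (1:ℝ) + r ≤ 2 * max 1 r := by
          rcases le_total r 1 with h | h
          · rw [max_eq_left h]; linarith
          · rw [max_eq_right h]; linarith
        calc (1 + r) ^ α ≤ (2 * max 1 r) ^ α :=
              Real.rpow_le_rpow h1r.le hm hα0.le
          _ = 2 ^ α * (max 1 r) ^ α := Real.mul_rpow (by norm_num) (by positivity)
          _ ≤ 2 ^ α * (1 + r ^ α) := by
              apply mul_le_mul_of_nonneg_left _ (by positivity)
              rcases le_total r 1 with h | h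
              · rw [max_eq_left h, Real.one_rpow]
                have : (0:ℝ) ≤ r ^ α := by positivity
                linarith
              · rw [max_eq_right (by linarith : (1:ℝ) ≤ r)]
                linarith
          
      have b2 : 1 + r ^ α ≤ max 1 s⁻¹ * (r ^ α + s) := by
        have h1 : (1:ℝ) ≤ max 1 s⁻¹ * s := by
          calc (1:ℝ) = s⁻¹ * s := by field_simp
            _ ≤ max 1 s⁻¹ * s := by
                apply mul_le_mul_of_nonneg_right (le_max_right _ _) hs.le
        have h2 : r ^ α ≤ max 1 s⁻¹ * r ^ α := by
          nth_rewrite 1 [← one_mul (r ^ α)]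
          exact mul_le_mul_of_nonneg_right (le_max_left _ _) (by positivity)
        nlinarith
      calc s * (1 + r) ^ α ≤ s * (2 ^ α * (1 + r ^ α)) :=
            mul_le_mul_of_nonneg_left b1 hs.le
        _ ≤ s * (2 ^ α * (max 1 s⁻¹ * (r ^ α + s))) := by
            apply mul_le_mul_of_nonneg_left _ hs.le
            exact mul_le_mul_of_nonneg_left b2 (by positivity)
        _ = C * (r ^ α + s) := by rw [hC]; ring
    have hfx : ‖s / (r ^ α + s)‖ = s / (r ^ α + s) := by
      rw [Real.norm_eq_abs, abs_of_nonneg (by positivity)]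
    rw [hfx, Real.rpow_neg h1r.le, ← div_eq_mul_inv, div_le_div_iff₀ hden hpow]
    linarith [key]
  · have oneD := SIRaux.oneD hα hs
    have hdim : Module.finrank ℝ (EuclideanSpace ℝ (Fin 2)) = 2 := finrank_euclideanSpace_fin
    have hrad := MeasureTheory.integral_fun_norm_addHaar
      (volume : Measure (EuclideanSpace ℝ (Fin 2))) (fun r : ℝ => s / (r ^ α + s))
    rw [hdim] at hrad
    have hball : (volume (Metric.ball (0 : EuclideanSpace ℝ (Fin 2)) 1)).toReal = π := by
      rw [EuclideanSpace.volume_ball]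
      norm_num [Real.Gamma_two, Real.sq_sqrt Real.pi_nonneg, ENNReal.toReal_ofReal Real.pi_nonneg]
    rw [hrad, measureReal_def, hball]
    have : ∫ y in Ioi (0:ℝ), y ^ (2 - 1) • (s / (y ^ α + s)) =
        ∫ y in Ioi (0:ℝ), y * (s / (y ^ α + s)) := by
      simp [smul_eq_mul]
    rw [this, oneD]
    have hα0 : (0:ℝ) < α := by linarith
    simp only [smul_eq_mul, nsmul_eq_mul, Nat.cast_ofNat]
    field_simp
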